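/- Let X be an object in an AIS-category (A, E). Then the poset of E-subobjects of X, with meet given by intersection (pullback) and join given by sum (pushout over the intersection), is a lattice: both operations are associative, commutative, and satisfy the absorption laws Y +_X (Y ∩_X Z) = Y = Y ∩_X (Y +_X Z). -/

import Mathlib

open CategoryTheory CategoryTheory.Limits

universe v u

variable {C : Type u} [Category.{v} C] [Preadditive C]

/-- `(i, d)` is a kernel-cokernel pair. -/
structure IsKernelCokernelPair {A B X : C} (i : A ⟶ B) (d : B ⟶ X) : Prop where
  w : i ≫ d = 0
  isKernel : Nonempty (IsLimit (KernelFork.ofι i w))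
  isCokernel : Nonempty (IsColimit (CokernelCofork.ofπ d w))

/-- A Quillen exact structure on an additive category. -/
structure ExactStructure (C : Type u) [Category.{v} C] [Preadditive C] :
    Type (max u v) where
  E : ∀ ⦃A B X : C⦄, (A ⟶ B) → (B ⟶ X) → Prop
  pair : ∀ ⦃A B X : C⦄ {i : A ⟶ B} {d : B ⟶ X}, E i d → IsKernelCokernelPair i d
  iso_closed : ∀ ⦃A B X A' B' X' : C⦄ {i : A ⟶ B} {d : B ⟶ X} {i' : A' ⟶ B'} {d' : B' ⟶ X'}
      (eA : A ≅ A') (eB : B ≅ B') (eX : X ≅ X'),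
      E i d → i ≫ eB.hom = eA.hom ≫ i' → d ≫ eX.hom = eB.hom ≫ d' → E i' d'
  admMono_id : ∀ A : C, ∃ (X : C) (d : A ⟶ X), E (𝟙 A) d
  admEpi_id : ∀ A : C, ∃ (X : C) (i : X ⟶ A), E i (𝟙 A)
  admMono_comp : ∀ ⦃A B D : C⦄ (f : A ⟶ B) (g : B ⟶ D),
      (∃ (X : C) (d : B ⟶ X), E f d) → (∃ (X : C) (d : D ⟶ X), E g d) →
      ∃ (X : C) (d : D ⟶ X), E (f ≫ g) d
  admEpi_comp : ∀ ⦃A B D : C⦄ (f : A ⟶ B) (g : B ⟶ D),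
      (∃ (X : C) (i : X ⟶ A), E i f) → (∃ (X : C) (i : X ⟶ B), E i g) →
      ∃ (X : C) (i : X ⟶ A), E i (f ≫ g)
  pushout_admMono : ∀ ⦃A B Z : C⦄ (i : A ⟶ B) (f : A ⟶ Z),
      (∃ (X : C) (d : B ⟶ X), E i d) →
      ∃ (D : C) (g : B ⟶ D) (j : Z ⟶ D) (w : i ≫ g = f ≫ j),
        Nonempty (IsColimit (PushoutCocone.mk g j w)) ∧ ∃ (X : C) (d : D ⟶ X), E j d
  pullback_admEpi : ∀ ⦃B D Z : C⦄ (h : B ⟶ D) (g : Z ⟶ D),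
      (∃ (X : C) (i : X ⟶ B), E i h) →
      ∃ (A : C) (f : A ⟶ B) (k : A ⟶ Z) (w : f ≫ h = k ≫ g),
        Nonempty (IsLimit (PullbackCone.mk f k w)) ∧ ∃ (X : C) (i : X ⟶ A), E i k

namespace ExactStructure

variable (Ex : ExactStructure C)

/-- `i` is an admissible monic. -/
def AdmMono {A B : C} (i : A ⟶ B) : Prop := ∃ (X : C) (d : B ⟶ X), Ex.E i d

/-- `d` is an admissible epic. -/
def AdmEpi {B X : C} (d : B ⟶ X) : Prop := ∃ (A : C) (i : A ⟶ B), Ex.E i d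

/-- `f` is admissible: it factors as an admissible epic followed by an admissible monic. -/
def Admissible {A B : C} (f : A ⟶ B) : Prop :=
  ∃ (Z : C) (e : A ⟶ Z) (m : Z ⟶ B), Ex.AdmEpi e ∧ Ex.AdmMono m ∧ e ≫ m = f

/-- `E` consists of all kernel-cokernel pairs. -/
def IsMaximalAll : Prop :=
  ∀ ⦃A B X : C⦄ (i : A ⟶ B) (d : B ⟶ X), IsKernelCokernelPair i d → Ex.E i d

/-- `S` is `E`-simple. -/
def ESimple (S : C) : Prop :=
  ¬ IsZero S ∧ ∀ ⦃A : C⦄ (i : A ⟶ S), Ex.AdmMono i → IsZero A ∨ IsIso i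

end ExactStructure

/-- `A` is abelian: it has finite products, kernels, cokernels, every mono is normal
and every epi is normal. -/
def IsAbelianCat (C : Type u) [Category.{v} C] [Preadditive C] : Prop :=
  HasFiniteProducts C ∧ HasKernels C ∧ HasCokernels C ∧
  (∀ ⦃X Y : C⦄ (f : X ⟶ Y), Mono f → Nonempty (NormalMono f)) ∧
  (∀ ⦃X Y : C⦄ (f : X ⟶ Y), Epi f → Nonempty (NormalEpi f))

/-- An admissible (`E`-)subobject of `X`. -/
structure ESub (Ex : ExactStructure C) (X : C) where
  obj : C
  ι : obj ⟶ X
  adm : Ex.AdmMono ι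

/-- The order on `E`-subobjects of `X`. -/
def ESubLe (Ex : ExactStructure C) {X : C} (s t : ESub Ex X) : Prop :=
  ∃ h : s.obj ⟶ t.obj, Ex.AdmMono h ∧ h ≫ t.ι = s.ι

/-- Two `E`-subobjects are isomorphic as subobjects. -/
def ESubEquiv (Ex : ExactStructure C) {X : C} (s t : ESub Ex X) : Prop :=
  ESubLe Ex s t ∧ ESubLe Ex t s

/-- The admissible intersection axiom (AI). -/
def AIAxiom (Ex : ExactStructure C) : Prop :=
  ∀ ⦃B Z D : C⦄ (g : B ⟶ D) (j : Z ⟶ D), Ex.AdmMono g → Ex.AdmMono j →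
    ∃ (A : C) (f : A ⟶ B) (f' : A ⟶ Z) (w : f ≫ g = f' ≫ j),
      Ex.AdmMono f ∧ Ex.AdmMono f' ∧ Nonempty (IsLimit (PullbackCone.mk f f' w))

/-- The admissible sum axiom (AS): for every pullback square of admissible monics,
the induced map from the pushout to the common codomain is an admissible monic. -/
def ASAxiom (Ex : ExactStructure C) : Prop :=
  ∀ ⦃A B Z D : C⦄ (f : A ⟶ B) (f' : A ⟶ Z) (g : B ⟶ D) (j : Z ⟶ D) (w : f ≫ g = f' ≫ j),
    Ex.AdmMono f → Ex.AdmMono f' → Ex.AdmMono g → Ex.AdmMono j →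
    IsLimit (PullbackCone.mk f f' w) →
    ∀ ⦃P : C⦄ (l : B ⟶ P) (k : Z ⟶ P) (w' : f ≫ l = f' ≫ k),
      IsColimit (PushoutCocone.mk l k w') →
      ∀ u : P ⟶ D, l ≫ u = g → k ≫ u = j → Ex.AdmMono u

/-- An AIS-category: an AI-category satisfying the admissible sum axiom. -/
def AISCat (Ex : ExactStructure C) : Prop := AIAxiom Ex ∧ ASAxiom Ex

/-- `f` is a kernel of some morphism. -/
def IsKernelMor {A B : C} (f : A ⟶ B) : Prop :=
  ∃ (Z : C) (g : B ⟶ Z) (w : f ≫ g = 0), Nonempty (IsLimit (KernelFork.ofι f w))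

/-- `f` is a cokernel of some morphism. -/
def IsCokernelMor {A B : C} (f : A ⟶ B) : Prop :=
  ∃ (Z : C) (g : Z ⟶ A) (w : g ≫ f = 0), Nonempty (IsColimit (CokernelCofork.ofπ f w))

/-- A quasi-abelian category: pre-abelian, kernels are stable under pushout and
cokernels are stable under pullback. -/
def IsQuasiAbelian (C : Type u) [Category.{v} C] [Preadditive C] : Prop :=
  HasKernels C ∧ HasCokernels C ∧
  (∀ ⦃A B Z : C⦄ (f : A ⟶ B) (t : A ⟶ Z), IsKernelMor f →
    ∀ ⦃P : C⦄ (s : B ⟶ P) (s' : Z ⟶ P) (w : f ≫ s = t ≫ s'),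
      IsColimit (PushoutCocone.mk s s' w) → IsKernelMor s') ∧
  (∀ ⦃A B Z : C⦄ (f : B ⟶ A) (t : Z ⟶ A), IsCokernelMor f →
    ∀ ⦃P : C⦄ (s : P ⟶ B) (s' : P ⟶ Z) (w : s ≫ f = s' ≫ t),
      IsLimit (PullbackCone.mk s s' w) → IsCokernelMor s')

/-- An `E`-composition series of length `n` for `X`. -/
structure CompSeries (Ex : ExactStructure C) (X : C) (n : ℕ) where
  obj : Fin (n + 1) → C
  map : ∀ i : Fin n, obj i.castSucc ⟶ obj i.succ
  zero : IsZero (obj 0)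
  top : obj (Fin.last n) ≅ X
  adm : ∀ i : Fin n, Ex.AdmMono (map i)
  simpleFactor : ∀ i : Fin n,
    ∃ (Q : C) (d : obj i.succ ⟶ Q), Ex.E (map i) d ∧ Ex.ESimple Q

/-- Two composition series are equivalent: there is a bijection of indices matching
isomorphic composition factors. -/
def CompSeries.EquivSeries {Ex : ExactStructure C} {X : C} {n m : ℕ}
    (s : CompSeries Ex X n) (t : CompSeries Ex X m) : Prop :=
  ∃ σ : Fin n ≃ Fin m, ∀ (i : Fin n) ⦃Q Q' : C⦄
    (d : s.obj i.succ ⟶ Q) (d' : t.obj (σ i).succ ⟶ Q'),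
    Ex.E (s.map i) d → Ex.E (t.map (σ i)) d' → Nonempty (Q ≅ Q')

/-- The Jordan-Hölder property for an exact structure. -/
def JordanHolder (Ex : ExactStructure C) : Prop :=
  ∀ (X : C) (n m : ℕ) (s : CompSeries Ex X n) (t : CompSeries Ex X m),
    n = m ∧ s.EquivSeries t

/-- A maximal `E`-subobject: one with `E`-simple cokernel. -/
def ESub.IsMax {Ex : ExactStructure C} {X : C} (A : ESub Ex X) : Prop :=
  ∃ (Q : C) (d : X ⟶ Q), Ex.E A.ι d ∧ Ex.ESimple Q

/-- `Y` belongs to the generalized intersection `Int_X(A, B)`: it is a maximal common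
`E`-subobject of `A` and `B`. -/
def InInt {Ex : ExactStructure C} {X : C} (A B Y : ESub Ex X) : Prop :=
  ESubLe Ex Y A ∧ ESubLe Ex Y B ∧
  ∀ Z : ESub Ex X, ESubLe Ex Z A → ESubLe Ex Z B → ESubLe Ex Y Z → ESubLe Ex Z Y

/-- A diamond exact category. -/
def DiamondCat (Ex : ExactStructure C) : Prop :=
  ∀ (X : C) (A B : ESub Ex X), A.IsMax → B.IsMax → ¬ ESubEquiv Ex A B →
    ∀ Y : ESub Ex X, InInt A B Y →
      (∀ (h : Y.obj ⟶ A.obj), Ex.AdmMono h → h ≫ A.ι = Y.ι →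
        ∀ ⦃Q : C⦄ (d : A.obj ⟶ Q), Ex.E h d → Ex.ESimple Q) ∧
      (∀ (h : Y.obj ⟶ B.obj), Ex.AdmMono h → h ≫ B.ι = Y.ι →
        ∀ ⦃Q : C⦄ (d : B.obj ⟶ Q), Ex.E h d → Ex.ESimple Q) ∧
      (∀ (hA : Y.obj ⟶ A.obj) (hB : Y.obj ⟶ B.obj), Ex.AdmMono hA → Ex.AdmMono hB →
        hA ≫ A.ι = Y.ι → hB ≫ B.ι = Y.ι →
        ∀ ⦃QXA QAY QXB QBY : C⦄
          (dXA : X ⟶ QXA) (dAY : A.obj ⟶ QAY) (dXB : X ⟶ QXB) (dBY : B.obj ⟶ QBY),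
          Ex.E A.ι dXA → Ex.E hA dAY → Ex.E B.ι dXB → Ex.E hB dBY →
          (Nonempty (QXA ≅ QXB) ∧ Nonempty (QAY ≅ QBY)) ∨
          (Nonempty (QXA ≅ QBY) ∧ Nonempty (QAY ≅ QXB)))

section AISLatticeAux

theorem ExactStructure.admMono_of_isIso (Ex : ExactStructure C) {A B : C} (φ : A ⟶ B)
    [IsIso φ] : Ex.AdmMono φ := by
  obtain ⟨Y, d, hE⟩ := Ex.admMono_id A
  exact ⟨Y, inv φ ≫ d,
    Ex.iso_closed (Iso.refl A) (asIso φ) (Iso.refl Y) hE (by simp) (by simp)⟩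

theorem ExactStructure.mono_of_admMono (Ex : ExactStructure C) {A B : C} {i : A ⟶ B}
    (h : Ex.AdmMono i) : Mono i := by
  obtain ⟨Y, d, hE⟩ := h
  obtain ⟨w, ⟨hlim⟩, -⟩ := Ex.pair hE
  have := mono_of_isLimit_fork hlim
  simpa using this

theorem esubEquiv_of_comm (Ex : ExactStructure C) {X : C} {s t : ESub Ex X}
    (φ : s.obj ⟶ t.obj) (ψ : t.obj ⟶ s.obj)
    (hφ : φ ≫ t.ι = s.ι) (hψ : ψ ≫ s.ι = t.ι) : ESubEquiv Ex s t := by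
  haveI hs : Mono s.ι := Ex.mono_of_admMono s.adm
  haveI ht : Mono t.ι := Ex.mono_of_admMono t.adm
  have h1 : φ ≫ ψ = 𝟙 _ := by
    rw [← cancel_mono s.ι, Category.assoc, hψ, hφ, Category.id_comp]
  have h2 : ψ ≫ φ = 𝟙 _ := by
    rw [← cancel_mono t.ι, Category.assoc, hφ, hψ, Category.id_comp]
  haveI : IsIso φ := ⟨ψ, h1, h2⟩
  haveI : IsIso ψ := ⟨φ, h2, h1⟩
  exact ⟨⟨φ, Ex.admMono_of_isIso φ, hφ⟩, ⟨ψ, Ex.admMono_of_isIso ψ, hψ⟩⟩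

/-- All the data of the intersection (pullback) and sum (pushout) of two `E`-subobjects. -/
structure MeetJoinData (Ex : ExactStructure C) {X : C} (A B : ESub Ex X) where
  P : C
  f : P ⟶ A.obj
  f' : P ⟶ B.obj
  w : f ≫ A.ι = f' ≫ B.ι
  hf : Ex.AdmMono f
  hf' : Ex.AdmMono f'
  isLim : IsLimit (PullbackCone.mk f f' w)
  S : C
  l : A.obj ⟶ S
  k : B.obj ⟶ S
  w' : f ≫ l = f' ≫ k
  isColim : IsColimit (PushoutCocone.mk l k w')
  u : S ⟶ X
  hu : Ex.AdmMono u
  hl : l ≫ u = A.ι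
  hk : k ≫ u = B.ι

theorem exists_meetJoinData {Ex : ExactStructure C} (h : AISCat Ex) {X : C}
    (A B : ESub Ex X) : Nonempty (MeetJoinData Ex A B) := by
  obtain ⟨P, f, f', w, hf, hf', ⟨lim⟩⟩ := h.1 A.ι B.ι A.adm B.adm
  obtain ⟨S, l, k, w', ⟨colim⟩, hkAdm⟩ := Ex.pushout_admMono f f' hf
  have hl : l ≫ PushoutCocone.IsColimit.desc colim A.ι B.ι w = A.ι :=
    PushoutCocone.IsColimit.inl_desc colim A.ι B.ι w
  have hk : k ≫ PushoutCocone.IsColimit.desc colim A.ι B.ι w = B.ι :=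
    PushoutCocone.IsColimit.inr_desc colim A.ι B.ι w
  have huAdm : Ex.AdmMono (PushoutCocone.IsColimit.desc colim A.ι B.ι w) :=
    h.2 f f' A.ι B.ι w hf hf' A.adm B.adm lim l k w' colim _ hl hk
  exact ⟨⟨P, f, f', w, hf, hf', lim, S, l, k, w', colim, _, huAdm, hl, hk⟩⟩

variable {Ex : ExactStructure C}

/-- A choice of meet/join data for every pair of `E`-subobjects. -/
noncomputable def mjd (h : AISCat Ex) {X : C} (A B : ESub Ex X) : MeetJoinData Ex A B :=
  Classical.choice (exists_meetJoinData h A B)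

/-- The intersection of two `E`-subobjects. -/
noncomputable def interE (h : AISCat Ex) {X : C} (A B : ESub Ex X) : ESub Ex X :=
  ⟨(mjd h A B).P, (mjd h A B).f ≫ A.ι, Ex.admMono_comp _ _ (mjd h A B).hf A.adm⟩

/-- The sum of two `E`-subobjects. -/
noncomputable def sumE (h : AISCat Ex) {X : C} (A B : ESub Ex X) : ESub Ex X :=
  ⟨(mjd h A B).S, (mjd h A B).u, (mjd h A B).hu⟩

attribute [reducible] interE sumE

theorem interE_comm (h : AISCat Ex) {X : C} (A B : ESub Ex X) :
    ESubEquiv Ex (interE h A B) (interE h B A) := by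
  obtain ⟨φ, hφ1, hφ2⟩ := PullbackCone.IsLimit.lift' (mjd h B A).isLim
    (mjd h A B).f' (mjd h A B).f (mjd h A B).w.symm
  change (mjd h A B).P ⟶ (mjd h B A).P at φ
  obtain ⟨ψ, hψ1, hψ2⟩ := PullbackCone.IsLimit.lift' (mjd h A B).isLim
    (mjd h B A).f' (mjd h B A).f (mjd h B A).w.symm
  change (mjd h B A).P ⟶ (mjd h A B).P at ψ
  have hφ1' : φ ≫ (mjd h B A).f = (mjd h A B).f' := hφ1
  have hψ1' : ψ ≫ (mjd h A B).f = (mjd h B A).f' := hψ1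
  refine esubEquiv_of_comm Ex φ ψ ?_ ?_
  · show φ ≫ (mjd h B A).f ≫ B.ι = (mjd h A B).f ≫ A.ι
    rw [← Category.assoc, hφ1', (mjd h A B).w]
  · show ψ ≫ (mjd h A B).f ≫ A.ι = (mjd h B A).f ≫ B.ι
    rw [← Category.assoc, hψ1', (mjd h B A).w]

theorem sumE_comm (h : AISCat Ex) {X : C} (A B : ESub Ex X) :
    ESubEquiv Ex (sumE h A B) (sumE h B A) := by
  haveI : Mono (mjd h B A).u := Ex.mono_of_admMono (mjd h B A).hu
  haveI : Mono (mjd h A B).u := Ex.mono_of_admMono (mjd h A B).hu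
  have wφ : (mjd h A B).f ≫ (mjd h B A).k = (mjd h A B).f' ≫ (mjd h B A).l := by
    rw [← cancel_mono (mjd h B A).u]
    simp only [Category.assoc]
    rw [(mjd h B A).hk, (mjd h B A).hl]
    exact (mjd h A B).w
  have wψ : (mjd h B A).f ≫ (mjd h A B).k = (mjd h B A).f' ≫ (mjd h A B).l := by
    rw [← cancel_mono (mjd h A B).u]
    simp only [Category.assoc]
    rw [(mjd h A B).hk, (mjd h A B).hl]
    exact (mjd h B A).w
  obtain ⟨φ, hφ1, hφ2⟩ := PushoutCocone.IsColimit.desc' (mjd h A B).isColim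
    (mjd h B A).k (mjd h B A).l wφ
  change (mjd h A B).S ⟶ (mjd h B A).S at φ
  obtain ⟨ψ, hψ1, hψ2⟩ := PushoutCocone.IsColimit.desc' (mjd h B A).isColim
    (mjd h A B).k (mjd h A B).l wψ
  change (mjd h B A).S ⟶ (mjd h A B).S at ψ
  have hφ1' : (mjd h A B).l ≫ φ = (mjd h B A).k := hφ1
  have hφ2' : (mjd h A B).k ≫ φ = (mjd h B A).l := hφ2
  have hψ1' : (mjd h B A).l ≫ ψ = (mjd h A B).k := hψ1
  have hψ2' : (mjd h B A).k ≫ ψ = (mjd h A B).l := hψ2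
  have hφu : φ ≫ (mjd h B A).u = (mjd h A B).u := by
    apply PushoutCocone.IsColimit.hom_ext (mjd h A B).isColim
    · show (mjd h A B).l ≫ φ ≫ (mjd h B A).u = (mjd h A B).l ≫ (mjd h A B).u
      rw [← Category.assoc, hφ1', (mjd h B A).hk, (mjd h A B).hl]
    · show (mjd h A B).k ≫ φ ≫ (mjd h B A).u = (mjd h A B).k ≫ (mjd h A B).u
      rw [← Category.assoc, hφ2', (mjd h B A).hl, (mjd h A B).hk]
  have hψu : ψ ≫ (mjd h A B).u = (mjd h B A).u := by
    apply PushoutCocone.IsColimit.hom_ext (mjd h B A).isColim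
    · show (mjd h B A).l ≫ ψ ≫ (mjd h A B).u = (mjd h B A).l ≫ (mjd h B A).u
      rw [← Category.assoc, hψ1', (mjd h A B).hk, (mjd h B A).hl]
    · show (mjd h B A).k ≫ ψ ≫ (mjd h A B).u = (mjd h B A).k ≫ (mjd h B A).u
      rw [← Category.assoc, hψ2', (mjd h A B).hl, (mjd h B A).hk]
  exact esubEquiv_of_comm Ex φ ψ hφu hψu

theorem interE_assoc (h : AISCat Ex) {X : C} (A B Z : ESub Ex X) :
    ESubEquiv Ex (interE h (interE h A B) Z) (interE h A (interE h B Z)) := by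
  have eLw : (mjd h (interE h A B) Z).f ≫ (mjd h A B).f ≫ A.ι
      = (mjd h (interE h A B) Z).f' ≫ Z.ι := (mjd h (interE h A B) Z).w
  have eRw : (mjd h A (interE h B Z)).f ≫ A.ι
      = (mjd h A (interE h B Z)).f' ≫ (mjd h B Z).f ≫ B.ι := (mjd h A (interE h B Z)).w
  -- the map `m : eL.P ⟶ e2.P`
  have wm : ((mjd h (interE h A B) Z).f ≫ (mjd h A B).f') ≫ B.ι
      = (mjd h (interE h A B) Z).f' ≫ Z.ι := by
    rw [Category.assoc, ← (mjd h A B).w]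
    exact eLw
  obtain ⟨m, hm1, hm2⟩ := PullbackCone.IsLimit.lift' (mjd h B Z).isLim
    ((mjd h (interE h A B) Z).f ≫ (mjd h A B).f') (mjd h (interE h A B) Z).f' wm
  change (mjd h (interE h A B) Z).P ⟶ (mjd h B Z).P at m
  have hm1' : m ≫ (mjd h B Z).f = (mjd h (interE h A B) Z).f ≫ (mjd h A B).f' := hm1
  -- the comparison map φ
  have wφ : ((mjd h (interE h A B) Z).f ≫ (mjd h A B).f) ≫ A.ι
      = m ≫ (mjd h B Z).f ≫ B.ι := by
    have hx : m ≫ (mjd h B Z).f ≫ B.ι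
        = ((mjd h (interE h A B) Z).f ≫ (mjd h A B).f') ≫ B.ι := by
      rw [← Category.assoc, hm1']
    rw [hx]
    simp only [Category.assoc]
    rw [(mjd h A B).w]
  obtain ⟨φ, hp1, hp2⟩ := PullbackCone.IsLimit.lift' (mjd h A (interE h B Z)).isLim
    ((mjd h (interE h A B) Z).f ≫ (mjd h A B).f) m wφ
  change (mjd h (interE h A B) Z).P ⟶ (mjd h A (interE h B Z)).P at φ
  have hp1' : φ ≫ (mjd h A (interE h B Z)).f
      = (mjd h (interE h A B) Z).f ≫ (mjd h A B).f := hp1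
  -- the map `m' : eR.P ⟶ e1.P`
  have wm' : (mjd h A (interE h B Z)).f ≫ A.ι
      = ((mjd h A (interE h B Z)).f' ≫ (mjd h B Z).f) ≫ B.ι := by
    rw [Category.assoc]; exact eRw
  obtain ⟨m', hn1, hn2⟩ := PullbackCone.IsLimit.lift' (mjd h A B).isLim
    (mjd h A (interE h B Z)).f ((mjd h A (interE h B Z)).f' ≫ (mjd h B Z).f) wm'
  change (mjd h A (interE h B Z)).P ⟶ (mjd h A B).P at m'
  have hn1' : m' ≫ (mjd h A B).f = (mjd h A (interE h B Z)).f := hn1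
  -- the comparison map ψ
  have wψ : m' ≫ (mjd h A B).f ≫ A.ι
      = ((mjd h A (interE h B Z)).f' ≫ (mjd h B Z).f') ≫ Z.ι := by
    rw [← Category.assoc, hn1', eRw]
    simp only [Category.assoc]
    rw [(mjd h B Z).w]
  obtain ⟨ψ, hq1, hq2⟩ := PullbackCone.IsLimit.lift' (mjd h (interE h A B) Z).isLim
    m' ((mjd h A (interE h B Z)).f' ≫ (mjd h B Z).f') wψ
  change (mjd h A (interE h B Z)).P ⟶ (mjd h (interE h A B) Z).P at ψ
  have hq1' : ψ ≫ (mjd h (interE h A B) Z).f = m' := hq1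
  refine esubEquiv_of_comm Ex φ ψ ?_ ?_
  · show φ ≫ (mjd h A (interE h B Z)).f ≫ A.ι
        = (mjd h (interE h A B) Z).f ≫ (mjd h A B).f ≫ A.ι
    rw [← Category.assoc, hp1']
    simp only [Category.assoc]
  · show ψ ≫ (mjd h (interE h A B) Z).f ≫ (mjd h A B).f ≫ A.ι
        = (mjd h A (interE h B Z)).f ≫ A.ι
    rw [← Category.assoc, hq1', ← Category.assoc, hn1']

theorem sumE_assoc (h : AISCat Ex) {X : C} (A B Z : ESub Ex X) :
    ESubEquiv Ex (sumE h (sumE h A B) Z) (sumE h A (sumE h B Z)) := by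
  haveI : Mono (mjd h (sumE h A B) Z).u := Ex.mono_of_admMono (mjd h (sumE h A B) Z).hu
  haveI : Mono (mjd h A (sumE h B Z)).u := Ex.mono_of_admMono (mjd h A (sumE h B Z)).hu
  -- retyped field facts
  have eLw : (mjd h (sumE h A B) Z).f ≫ (mjd h A B).u
      = (mjd h (sumE h A B) Z).f' ≫ Z.ι := (mjd h (sumE h A B) Z).w
  have eLhl : (mjd h (sumE h A B) Z).l ≫ (mjd h (sumE h A B) Z).u
      = (mjd h A B).u := (mjd h (sumE h A B) Z).hl
  have eLhk : (mjd h (sumE h A B) Z).k ≫ (mjd h (sumE h A B) Z).u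
      = Z.ι := (mjd h (sumE h A B) Z).hk
  have eRw : (mjd h A (sumE h B Z)).f ≫ A.ι
      = (mjd h A (sumE h B Z)).f' ≫ (mjd h B Z).u := (mjd h A (sumE h B Z)).w
  have eRhl : (mjd h A (sumE h B Z)).l ≫ (mjd h A (sumE h B Z)).u
      = A.ι := (mjd h A (sumE h B Z)).hl
  have eRhk : (mjd h A (sumE h B Z)).k ≫ (mjd h A (sumE h B Z)).u
      = (mjd h B Z).u := (mjd h A (sumE h B Z)).hk
  -- the map `t : e1.S ⟶ eR.S`
  have wt : (mjd h A B).f ≫ (mjd h A (sumE h B Z)).l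
      = (mjd h A B).f' ≫ ((mjd h B Z).l ≫ (mjd h A (sumE h B Z)).k) := by
    rw [← cancel_mono (mjd h A (sumE h B Z)).u]
    simp only [Category.assoc]
    rw [eRhl, eRhk, (mjd h B Z).hl]
    exact (mjd h A B).w
  obtain ⟨t, ht1, ht2⟩ := PushoutCocone.IsColimit.desc' (mjd h A B).isColim
    (mjd h A (sumE h B Z)).l ((mjd h B Z).l ≫ (mjd h A (sumE h B Z)).k) wt
  change (mjd h A B).S ⟶ (mjd h A (sumE h B Z)).S at t
  have ht1' : (mjd h A B).l ≫ t = (mjd h A (sumE h B Z)).l := ht1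
  have ht2' : (mjd h A B).k ≫ t = (mjd h B Z).l ≫ (mjd h A (sumE h B Z)).k := ht2
  have htu : t ≫ (mjd h A (sumE h B Z)).u = (mjd h A B).u := by
    apply PushoutCocone.IsColimit.hom_ext (mjd h A B).isColim
    · show (mjd h A B).l ≫ t ≫ (mjd h A (sumE h B Z)).u = (mjd h A B).l ≫ (mjd h A B).u
      rw [← Category.assoc, ht1', eRhl, (mjd h A B).hl]
    · show (mjd h A B).k ≫ t ≫ (mjd h A (sumE h B Z)).u = (mjd h A B).k ≫ (mjd h A B).u
      rw [← Category.assoc, ht2', (mjd h A B).hk]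
      simp only [Category.assoc]
      rw [eRhk, (mjd h B Z).hl]
  -- the comparison map Φ
  have wΦ : (mjd h (sumE h A B) Z).f ≫ t
      = (mjd h (sumE h A B) Z).f' ≫ ((mjd h B Z).k ≫ (mjd h A (sumE h B Z)).k) := by
    rw [← cancel_mono (mjd h A (sumE h B Z)).u]
    simp only [Category.assoc]
    rw [htu, eLw, eRhk, (mjd h B Z).hk]
  obtain ⟨Φ, hΦ1, hΦ2⟩ := PushoutCocone.IsColimit.desc' (mjd h (sumE h A B) Z).isColim
    t ((mjd h B Z).k ≫ (mjd h A (sumE h B Z)).k) wΦ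
  change (mjd h (sumE h A B) Z).S ⟶ (mjd h A (sumE h B Z)).S at Φ
  have hΦ1' : (mjd h (sumE h A B) Z).l ≫ Φ = t := hΦ1
  have hΦ2' : (mjd h (sumE h A B) Z).k ≫ Φ
      = (mjd h B Z).k ≫ (mjd h A (sumE h B Z)).k := hΦ2
  have hΦu : Φ ≫ (mjd h A (sumE h B Z)).u = (mjd h (sumE h A B) Z).u := by
    apply PushoutCocone.IsColimit.hom_ext (mjd h (sumE h A B) Z).isColim
    · show (mjd h (sumE h A B) Z).l ≫ Φ ≫ (mjd h A (sumE h B Z)).u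
          = (mjd h (sumE h A B) Z).l ≫ (mjd h (sumE h A B) Z).u
      rw [← Category.assoc, hΦ1', htu, eLhl]
    · show (mjd h (sumE h A B) Z).k ≫ Φ ≫ (mjd h A (sumE h B Z)).u
          = (mjd h (sumE h A B) Z).k ≫ (mjd h (sumE h A B) Z).u
      rw [← Category.assoc, hΦ2', eLhk]
      simp only [Category.assoc]
      rw [eRhk, (mjd h B Z).hk]
  -- the map `t' : e2.S ⟶ eL.S`
  have wt' : (mjd h B Z).f ≫ ((mjd h A B).k ≫ (mjd h (sumE h A B) Z).l)
      = (mjd h B Z).f' ≫ (mjd h (sumE h A B) Z).k := by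
    rw [← cancel_mono (mjd h (sumE h A B) Z).u]
    simp only [Category.assoc]
    rw [eLhl, eLhk, (mjd h A B).hk]
    exact (mjd h B Z).w
  obtain ⟨t', hs1, hs2⟩ := PushoutCocone.IsColimit.desc' (mjd h B Z).isColim
    ((mjd h A B).k ≫ (mjd h (sumE h A B) Z).l) (mjd h (sumE h A B) Z).k wt'
  change (mjd h B Z).S ⟶ (mjd h (sumE h A B) Z).S at t'
  have hs1' : (mjd h B Z).l ≫ t' = (mjd h A B).k ≫ (mjd h (sumE h A B) Z).l := hs1
  have hs2' : (mjd h B Z).k ≫ t' = (mjd h (sumE h A B) Z).k := hs2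
  have ht'u : t' ≫ (mjd h (sumE h A B) Z).u = (mjd h B Z).u := by
    apply PushoutCocone.IsColimit.hom_ext (mjd h B Z).isColim
    · show (mjd h B Z).l ≫ t' ≫ (mjd h (sumE h A B) Z).u = (mjd h B Z).l ≫ (mjd h B Z).u
      rw [← Category.assoc, hs1', (mjd h B Z).hl]
      simp only [Category.assoc]
      rw [eLhl, (mjd h A B).hk]
    · show (mjd h B Z).k ≫ t' ≫ (mjd h (sumE h A B) Z).u = (mjd h B Z).k ≫ (mjd h B Z).u
      rw [← Category.assoc, hs2', eLhk, (mjd h B Z).hk]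
  -- the comparison map Ψ
  have wΨ : (mjd h A (sumE h B Z)).f ≫ ((mjd h A B).l ≫ (mjd h (sumE h A B) Z).l)
      = (mjd h A (sumE h B Z)).f' ≫ t' := by
    rw [← cancel_mono (mjd h (sumE h A B) Z).u]
    simp only [Category.assoc]
    rw [ht'u, eLhl, (mjd h A B).hl]
    exact eRw
  obtain ⟨Ψ, hr1, hr2⟩ := PushoutCocone.IsColimit.desc' (mjd h A (sumE h B Z)).isColim
    ((mjd h A B).l ≫ (mjd h (sumE h A B) Z).l) t' wΨ
  change (mjd h A (sumE h B Z)).S ⟶ (mjd h (sumE h A B) Z).S at Ψ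
  have hr1' : (mjd h A (sumE h B Z)).l ≫ Ψ
      = (mjd h A B).l ≫ (mjd h (sumE h A B) Z).l := hr1
  have hr2' : (mjd h A (sumE h B Z)).k ≫ Ψ = t' := hr2
  have hΨu : Ψ ≫ (mjd h (sumE h A B) Z).u = (mjd h A (sumE h B Z)).u := by
    apply PushoutCocone.IsColimit.hom_ext (mjd h A (sumE h B Z)).isColim
    · show (mjd h A (sumE h B Z)).l ≫ Ψ ≫ (mjd h (sumE h A B) Z).u
          = (mjd h A (sumE h B Z)).l ≫ (mjd h A (sumE h B Z)).u
      rw [← Category.assoc, hr1', eRhl]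
      simp only [Category.assoc]
      rw [eLhl, (mjd h A B).hl]
    · show (mjd h A (sumE h B Z)).k ≫ Ψ ≫ (mjd h (sumE h A B) Z).u
          = (mjd h A (sumE h B Z)).k ≫ (mjd h A (sumE h B Z)).u
      rw [← Category.assoc, hr2', ht'u, eRhk]
  exact esubEquiv_of_comm Ex Φ Ψ hΦu hΨu

theorem sumE_absorb (h : AISCat Ex) {X : C} (A B : ESub Ex X) :
    ESubEquiv Ex (sumE h A (interE h A B)) A := by
  haveI : Mono A.ι := Ex.mono_of_admMono A.adm
  have ew : (mjd h A (interE h A B)).f ≫ A.ι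
      = (mjd h A (interE h A B)).f' ≫ (mjd h A B).f ≫ A.ι := (mjd h A (interE h A B)).w
  have ehk : (mjd h A (interE h A B)).k ≫ (mjd h A (interE h A B)).u
      = (mjd h A B).f ≫ A.ι := (mjd h A (interE h A B)).hk
  have wφ : (mjd h A (interE h A B)).f ≫ 𝟙 A.obj
      = (mjd h A (interE h A B)).f' ≫ (mjd h A B).f := by
    rw [Category.comp_id, ← cancel_mono A.ι]
    simp only [Category.assoc]
    exact ew
  obtain ⟨φ, hφ1, hφ2⟩ := PushoutCocone.IsColimit.desc' (mjd h A (interE h A B)).isColim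
    (𝟙 A.obj) (mjd h A B).f wφ
  change (mjd h A (interE h A B)).S ⟶ A.obj at φ
  have hφ1' : (mjd h A (interE h A B)).l ≫ φ = 𝟙 A.obj := hφ1
  have hφ2' : (mjd h A (interE h A B)).k ≫ φ = (mjd h A B).f := hφ2
  have hφu : φ ≫ A.ι = (mjd h A (interE h A B)).u := by
    apply PushoutCocone.IsColimit.hom_ext (mjd h A (interE h A B)).isColim
    · show (mjd h A (interE h A B)).l ≫ φ ≫ A.ι
          = (mjd h A (interE h A B)).l ≫ (mjd h A (interE h A B)).u
      rw [← Category.assoc, hφ1', Category.id_comp, (mjd h A (interE h A B)).hl]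
    · show (mjd h A (interE h A B)).k ≫ φ ≫ A.ι
          = (mjd h A (interE h A B)).k ≫ (mjd h A (interE h A B)).u
      rw [← Category.assoc, hφ2', ehk]
  exact esubEquiv_of_comm Ex φ (mjd h A (interE h A B)).l hφu (mjd h A (interE h A B)).hl

theorem interE_absorb (h : AISCat Ex) {X : C} (A B : ESub Ex X) :
    ESubEquiv Ex (interE h A (sumE h A B)) A := by
  have wψ : 𝟙 A.obj ≫ A.ι = (mjd h A B).l ≫ (mjd h A B).u := by
    rw [Category.id_comp, (mjd h A B).hl]
  obtain ⟨ψ, hψ1, hψ2⟩ := PullbackCone.IsLimit.lift' (mjd h A (sumE h A B)).isLim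
    (𝟙 A.obj) (mjd h A B).l wψ
  change A.obj ⟶ (mjd h A (sumE h A B)).P at ψ
  have hψ1' : ψ ≫ (mjd h A (sumE h A B)).f = 𝟙 A.obj := hψ1
  refine esubEquiv_of_comm Ex (mjd h A (sumE h A B)).f ψ rfl ?_
  · show ψ ≫ (mjd h A (sumE h A B)).f ≫ A.ι = A.ι
    rw [← Category.assoc, hψ1', Category.id_comp]

end AISLatticeAux

/-- In an AIS-category the poset of `E`-subobjects of any object `X` is a lattice, with
meet the intersection (pullback) and join the sum (pushout over the intersection):
both operations are commutative, associative and satisfy the absorption laws. -/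
theorem stmt13 [HasKernels C] [HasCokernels C] (Ex : ExactStructure C)
    (hAIS : AISCat Ex) (X : C) :
    ∃ inter sum : ESub Ex X → ESub Ex X → ESub Ex X,
      (∀ A B : ESub Ex X, ∃ (p : (inter A B).obj ⟶ A.obj) (q : (inter A B).obj ⟶ B.obj)
        (w : p ≫ A.ι = q ≫ B.ι),
        Nonempty (IsLimit (PullbackCone.mk p q w)) ∧ p ≫ A.ι = (inter A B).ι) ∧
      (∀ A B : ESub Ex X, ∃ (p : (inter A B).obj ⟶ A.obj) (q : (inter A B).obj ⟶ B.obj)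
        (w : p ≫ A.ι = q ≫ B.ι) (u : A.obj ⟶ (sum A B).obj) (v : B.obj ⟶ (sum A B).obj)
        (w' : p ≫ u = q ≫ v),
        Nonempty (IsLimit (PullbackCone.mk p q w)) ∧
        Nonempty (IsColimit (PushoutCocone.mk u v w')) ∧
        u ≫ (sum A B).ι = A.ι ∧ v ≫ (sum A B).ι = B.ι) ∧
      (∀ A B : ESub Ex X, ESubEquiv Ex (inter A B) (inter B A)) ∧
      (∀ A B : ESub Ex X, ESubEquiv Ex (sum A B) (sum B A)) ∧
      (∀ A B Z : ESub Ex X, ESubEquiv Ex (inter (inter A B) Z) (inter A (inter B Z))) ∧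
      (∀ A B Z : ESub Ex X, ESubEquiv Ex (sum (sum A B) Z) (sum A (sum B Z))) ∧
      (∀ A B : ESub Ex X, ESubEquiv Ex (sum A (inter A B)) A) ∧
      (∀ A B : ESub Ex X, ESubEquiv Ex (inter A (sum A B)) A) := by
  refine ⟨interE hAIS, sumE hAIS, ?_, ?_, fun A B => interE_comm hAIS A B,
    fun A B => sumE_comm hAIS A B, fun A B Z => interE_assoc hAIS A B Z,
    fun A B Z => sumE_assoc hAIS A B Z, fun A B => sumE_absorb hAIS A B,
    fun A B => interE_absorb hAIS A B⟩
  · intro A B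
    exact ⟨(mjd hAIS A B).f, (mjd hAIS A B).f', (mjd hAIS A B).w,
      ⟨(mjd hAIS A B).isLim⟩, rfl⟩
  · intro A B
    exact ⟨(mjd hAIS A B).f, (mjd hAIS A B).f', (mjd hAIS A B).w, (mjd hAIS A B).l,
      (mjd hAIS A B).k, (mjd hAIS A B).w', ⟨(mjd hAIS A B).isLim⟩,
      ⟨(mjd hAIS A B).isColim⟩, (mjd hAIS A B).hl, (mjd hAIS A B).hk⟩
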